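/- Let f : ℝ^d → ℝ be twice differentiable with L₂-Lipschitz continuous Hessian, x a point with ‖∇f(x)‖ ≤ ε and v a unit vector with vᵀ∇²f(x)v ≤ -cγ for some c, γ > 0. Define x₊ = x - (cγ/L₂)·sign(vᵀ∇f(x))·v. Then f(x) - f(x₊) ≥ c³γ³/(3L₂²). -/

import Mathlib

open scoped RealInnerProductSpace

/-- Negative-curvature descent step decreases the objective by
`c³γ³/(3L₂²)`. -/
theorem neg_curvature_step_decrease {d : ℕ}
    (f : EuclideanSpace ℝ (Fin d) → ℝ)
    (g : EuclideanSpace ℝ (Fin d) → EuclideanSpace ℝ (Fin d))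
    (H : EuclideanSpace ℝ (Fin d) → EuclideanSpace ℝ (Fin d) →L[ℝ] EuclideanSpace ℝ (Fin d))
    (L₂ c γ ε : ℝ) (hL₂ : 0 < L₂) (hc : 0 < c) (hγ : 0 < γ)
    (hgrad : ∀ x, HasGradientAt f (g x) x)
    (hTaylor : ∀ x y : EuclideanSpace ℝ (Fin d),
      abs (f x - f y - ⟪g y, x - y⟫ - (1 / 2) * ⟪H y (x - y), x - y⟫)
        ≤ L₂ / 6 * ‖x - y‖ ^ 3)
    (x v : EuclideanSpace ℝ (Fin d)) (hv : ‖v‖ = 1)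
    (hsmallgrad : ‖g x‖ ≤ ε)
    (hnc : ⟪H x v, v⟫ ≤ -(c * γ))
    (xp : EuclideanSpace ℝ (Fin d))
    (hxp : xp = x - ((c * γ / L₂) * (if 0 ≤ ⟪g x, v⟫ then 1 else -1)) • v) :
    f x - f xp ≥ c ^ 3 * γ ^ 3 / (3 * L₂ ^ 2) := by
  have hT := hTaylor xp x
  set s : ℝ := (if 0 ≤ ⟪g x, v⟫ then 1 else -1) with hs
  have hss : s * s = 1 := by rw [hs]; split_ifs <;> ring
  have habs : |s| = 1 := by rw [hs]; split_ifs <;> simp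
  set η : ℝ := c * γ / L₂ with hη
  have hηpos : 0 < η := by positivity
  have hdiff : xp - x = (-(η * s)) • v := by
    rw [hxp]; module
  have hnorm : ‖xp - x‖ = η := by
    rw [hdiff, norm_smul, hv, mul_one, Real.norm_eq_abs, abs_neg, abs_mul, habs,
      mul_one, abs_of_pos hηpos]
  have h1 : ⟪g x, xp - x⟫ ≤ 0 := by
    rw [hdiff, real_inner_smul_right]
    have hsg : 0 ≤ s * ⟪g x, v⟫ := by
      rw [hs]; split_ifs with h
      · simpa using h
      · nlinarith [not_le.mp h]
    nlinarith
  have h2 : ⟪H x (xp - x), xp - x⟫ = η ^ 2 * ⟪H x v, v⟫ := by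
    calc ⟪H x (xp - x), xp - x⟫
        = (-(η * s)) * ((-(η * s)) * ⟪H x v, v⟫) := by
          rw [hdiff, map_smul, real_inner_smul_left, real_inner_smul_right]
      _ = η ^ 2 * (s * s) * ⟪H x v, v⟫ := by ring
      _ = η ^ 2 * ⟪H x v, v⟫ := by rw [hss]; ring
  rw [hnorm, h2] at hT
  have hT' := (abs_le.mp hT).2
  have hLη : L₂ * η = c * γ := by rw [hη]; field_simp [hL₂.ne']
  have key : f x - f xp ≥ L₂ * η ^ 3 / 3 := by nlinarith [mul_le_mul_of_nonneg_left hnc (sq_nonneg η), hηpos, hLη]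
  have : c ^ 3 * γ ^ 3 / (3 * L₂ ^ 2) = L₂ * η ^ 3 / 3 := by
    field_simp [hη]; linear_combination (-((L₂ * η) ^ 2 + (L₂ * η) * (c * γ) + (c * γ) ^ 2)) * hLη
  linarith [key, this.ge, this.le]
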